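/- Let r₂ be a real number with r₂ < 0 and set s = √(−3r₂). For all real u and v with u ≠ 0, v ≠ 0, u + v ≠ 0 and u − v ≠ 0 (so in particular ℘_d(u) ≠ ℘_d(v)), the degenerate zeta identity holds: ℘_d'(u)/(℘_d(u) − ℘_d(v)) = ζ_d(u + v) + ζ_d(u − v) − 2·ζ_d(u), where ℘_d'(ξ) = −2·(−3r₂)^(3/2)·cosh(s·ξ)/sinh(s·ξ)³. -/

import Mathlib

/-- Degenerate Weierstrass ℘-function `℘_d(ξ) = −r₂ − 3r₂/sinh(sξ)²`, `s = √(−3r₂)`. -/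
noncomputable def pd (r₂ ξ : ℝ) : ℝ :=
  -r₂ - 3*r₂ / (Real.sinh (Real.sqrt (-3*r₂) * ξ))^2

/-- Its derivative `℘_d'(ξ) = −2(−3r₂)^(3/2)·cosh(sξ)/sinh(sξ)³`. -/
noncomputable def pd' (r₂ ξ : ℝ) : ℝ :=
  -2*(-3*r₂)^((3:ℝ)/2) * Real.cosh (Real.sqrt (-3*r₂) * ξ) /
    (Real.sinh (Real.sqrt (-3*r₂) * ξ))^3

/-- Degenerate Weierstrass ζ-function `ζ_d(ξ) = r₂ξ + s·coth(sξ)`, `s = √(−3r₂)`. -/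
noncomputable def zd (r₂ ξ : ℝ) : ℝ :=
  r₂*ξ + Real.sqrt (-3*r₂) *
    (Real.cosh (Real.sqrt (-3*r₂) * ξ) / Real.sinh (Real.sqrt (-3*r₂) * ξ))

/-- Degenerate Weierstrass σ-function `σ_d(ξ) = exp(r₂ξ²/2)·sinh(sξ)/s`, `s = √(−3r₂)`. -/
noncomputable def sd (r₂ ξ : ℝ) : ℝ :=
  Real.exp (r₂*ξ^2/2) * Real.sinh (Real.sqrt (-3*r₂) * ξ) / Real.sqrt (-3*r₂)

/-- Degenerate zeta identity:
`℘_d'(u)/(℘_d(u) − ℘_d(v)) = ζ_d(u+v) + ζ_d(u−v) − 2ζ_d(u)`. -/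
theorem stmt_18 (r₂ : ℝ) (hr : r₂ < 0) (u v : ℝ) (hu : u ≠ 0) (hv : v ≠ 0)
    (huv : u + v ≠ 0) (huv' : u - v ≠ 0) :
    pd' r₂ u / (pd r₂ u - pd r₂ v) =
      zd r₂ (u + v) + zd r₂ (u - v) - 2 * zd r₂ u := by
  have h3 : (0:ℝ) < -3*r₂ := by linarith
  set s := Real.sqrt (-3*r₂) with hsdef
  have hs2 : s^2 = -3*r₂ := Real.sq_sqrt h3.le
  have hspos : 0 < s := Real.sqrt_pos.mpr h3
  have hsu : Real.sinh (s*u) ≠ 0 := by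
    rw [ne_eq, Real.sinh_eq_zero]; exact mul_ne_zero hspos.ne' hu
  have hsv : Real.sinh (s*v) ≠ 0 := by
    rw [ne_eq, Real.sinh_eq_zero]; exact mul_ne_zero hspos.ne' hv
  have hsuv : Real.sinh (s*u + s*v) ≠ 0 := by
    rw [ne_eq, ← mul_add, Real.sinh_eq_zero]; exact mul_ne_zero hspos.ne' huv
  have hsuv' : Real.sinh (s*u - s*v) ≠ 0 := by
    rw [ne_eq, ← mul_sub, Real.sinh_eq_zero]; exact mul_ne_zero hspos.ne' huv'
  have h32 : (-3*r₂)^((3:ℝ)/2) = s^2 * s := by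
    rw [show (3:ℝ)/2 = 1 + 1/2 by norm_num, Real.rpow_add h3, Real.rpow_one,
      ← Real.sqrt_eq_rpow, ← hsdef, hs2]
  have ha := Real.cosh_sq (s*u)
  have hb := Real.cosh_sq (s*v)
  have key : pd r₂ u - pd r₂ v =
      -(s^2 * (Real.sinh (s*u + s*v) * Real.sinh (s*u - s*v))) /
        ((Real.sinh (s*u))^2 * (Real.sinh (s*v))^2) := by
    unfold pd
    rw [← hsdef, Real.sinh_add, Real.sinh_sub]
    field_simp
    linear_combination (Real.sinh (s*u)^2 - Real.sinh (s*v)^2) * hs2 + s^2*Real.sinh (s*u)^2*hb - s^2*Real.sinh (s*v)^2*ha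
  have hkeyne : pd r₂ u - pd r₂ v ≠ 0 := by
    rw [key]
    exact div_ne_zero (neg_ne_zero.mpr (mul_ne_zero (pow_ne_zero 2 hspos.ne')
      (mul_ne_zero hsuv hsuv'))) (mul_ne_zero (pow_ne_zero 2 hsu) (pow_ne_zero 2 hsv))
  rw [div_eq_iff hkeyne, key]
  unfold pd' zd
  rw [← hsdef, h32, mul_add s u v, mul_sub s u v, Real.sinh_add, Real.sinh_sub,
    Real.cosh_add, Real.cosh_sub]
  rw [Real.sinh_add] at hsuv
  rw [Real.sinh_sub] at hsuv'
  field_simp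
  linear_combination (2*s*Real.cosh (s*u)*Real.sinh (s*v)^2) * ha
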